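/- For every nonnegative integer n and nonnegative integer p, ∑_{k=0}^{2m} (-1)^k C(n,k) C(2p+n+k, p+k) H_k with n = 2m equals C(2p+n, p) · (2H_{2m} - H_m + H_{p+m} - H_p); and with n = 2m+1 it equals C(2p+n, p) · (H_p - H_{p+m} + H_m - 2H_{2m+1}). Here H_j denotes the j-th harmonic number and the sum runs over 0 ≤ k ≤ n. -/

import Mathlib

open Finset

noncomputable def H (n : ℕ) : ℝ := ∑ i ∈ Finset.range n, (1:ℝ)/(i+1)

set_option maxHeartbeats 1000000

lemma H_succ (n : ℕ) : H (n+1) = H n + 1/((n:ℝ)+1) := by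
  simp [H, Finset.sum_range_succ]

lemma recA (M : ℕ) (f : ℕ → ℝ) :
    ∑ l ∈ range (M+2), (-1:ℝ)^l * ((M+1).choose l) * f l
    = ∑ l ∈ range (M+1), (-1:ℝ)^l * (M.choose l) * f l
      - ∑ l ∈ range (M+1), (-1:ℝ)^l * (M.choose l) * f (l+1) := by
  have e1 : ∑ l ∈ range (M+2), (-1:ℝ)^l * ((M+1).choose l) * f l
      = (∑ l ∈ range (M+1), (-1:ℝ)^(l+1) * (((M+1).choose (l+1) : ℕ) : ℝ) * f (l+1)) + f 0 := by
    rw [Finset.sum_range_succ' (fun l => (-1:ℝ)^l * (((M+1).choose l : ℕ) : ℝ) * f l) (M+1)]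
    simp
  have e2 : ∑ l ∈ range (M+2), (-1:ℝ)^l * ((M.choose l : ℕ) : ℝ) * f l
      = (∑ l ∈ range (M+1), (-1:ℝ)^(l+1) * ((M.choose (l+1) : ℕ) : ℝ) * f (l+1)) + f 0 := by
    rw [Finset.sum_range_succ' (fun l => (-1:ℝ)^l * ((M.choose l : ℕ) : ℝ) * f l) (M+1)]
    simp
  have e3 : ∑ l ∈ range (M+2), (-1:ℝ)^l * ((M.choose l : ℕ) : ℝ) * f l
      = ∑ l ∈ range (M+1), (-1:ℝ)^l * ((M.choose l : ℕ) : ℝ) * f l := by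
    rw [Finset.sum_range_succ]
    simp [Nat.choose_succ_self]
  rw [e3] at e2
  rw [e1]
  have e4 : ∀ l ∈ range (M+1), (-1:ℝ)^(l+1) * (((M+1).choose (l+1) : ℕ) : ℝ) * f (l+1)
      = (-1:ℝ)^(l+1) * ((M.choose (l+1) : ℕ) : ℝ) * f (l+1)
        - (-1:ℝ)^l * ((M.choose l : ℕ) : ℝ) * f (l+1) := by
    intro l _
    rw [Nat.choose_succ_succ]
    push_cast
    ring
  rw [Finset.sum_congr rfl e4, Finset.sum_sub_distrib]
  linarith [e2]

lemma lemA : ∀ M i : ℕ, ∑ l ∈ range (M+2), (-1:ℝ)^l * ((M+1).choose l) * H (l+i)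
    = -1 / (((M:ℝ)+1) * (((M+1+i).choose i : ℕ) : ℝ)) := by
  intro M
  induction M with
  | zero =>
    intro i
    have h1 : (1+i).choose i = i+1 := by
      rw [Nat.choose_symm_of_eq_add (Nat.add_comm 1 i)]
      simp [Nat.add_comm]
    rw [show (0:ℕ)+2 = 2 from rfl]
    rw [Finset.sum_range_succ, Finset.sum_range_succ, Finset.sum_range_zero]
    simp only [show (0:ℕ)+1+i = 1+i from rfl, h1]
    rw [show (1:ℕ)+i = i+1 from by omega, H_succ]
    have : ((i:ℝ)+1) ≠ 0 := by positivity
    simp [Nat.choose]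
    field_simp
  | succ M ih =>
    intro i
    rw [recA (M+1) (fun l => H (l+i))]
    have h2 : ∑ l ∈ range (M+2), (-1:ℝ)^l * ((M+1).choose l) * H (l+1+i)
        = -1 / (((M:ℝ)+1) * (((M+1+(i+1)).choose (i+1) : ℕ) : ℝ)) := by
      rw [← ih (i+1)]
      apply Finset.sum_congr rfl
      intro l _
      rw [show l+1+i = l+(i+1) from by omega]
    rw [ih i, h2]
    -- arithmetic
    have hn1 : (M+1+(i+1)).choose (i+1) = (M+2+i).choose (i+1) := by
      rw [show M+1+(i+1) = M+2+i from by omega]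
    have hn2 : (M+1+1+i) = M+2+i := by omega
    rw [hn1, hn2]
    have f1 : (M+2+i) * ((M+1+i).choose i) = (M+2+i).choose (i+1) * (i+1) := by
      have := Nat.add_one_mul_choose_eq (M+1+i) i
      simpa [Nat.succ_eq_add_one, show M+1+i+1 = M+2+i from by omega] using this
    have f2 : (M+2+i) * ((M+1+i).choose i) = (M+2+i).choose i * (M+2) := by
      have h3 : (M+1+i).choose (M+1) = (M+1+i).choose i :=
        Nat.choose_symm_of_eq_add (show M+1+i = (M+1)+i from rfl)
      have h4 : (M+2+i).choose (M+2) = (M+2+i).choose i :=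
        Nat.choose_symm_of_eq_add (show M+2+i = (M+2)+i from rfl)
      have := Nat.add_one_mul_choose_eq (M+1+i) (M+1)
      simp only [Nat.succ_eq_add_one, show M+1+i+1 = M+2+i from by omega, show M+1+1 = M+2 from rfl] at this
      rw [h3] at this
      rw [h4] at this  -- careful direction
      exact this
    have p1 : 0 < (M+1+i).choose i := Nat.choose_pos (by omega)
    have p2 : 0 < (M+2+i).choose (i+1) := Nat.choose_pos (by omega)
    have p3 : 0 < (M+2+i).choose i := Nat.choose_pos (by omega)
    have c1 : ((M:ℝ)+2+i) * ((M+1+i).choose i : ℕ) = (((M+2+i).choose (i+1) : ℕ) : ℝ) * ((i:ℝ)+1) := by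
      exact_mod_cast congrArg (Nat.cast : ℕ → ℝ) f1
    have c2 : ((M:ℝ)+2+i) * ((M+1+i).choose i : ℕ) = (((M+2+i).choose i : ℕ) : ℝ) * ((M:ℝ)+2) := by
      exact_mod_cast congrArg (Nat.cast : ℕ → ℝ) f2
    have q1 : (((M+1+i).choose i : ℕ) : ℝ) ≠ 0 := by
      exact_mod_cast Nat.pos_iff_ne_zero.mp p1
    have hb : (((M+2+i).choose (i+1) : ℕ) : ℝ)
        = ((M:ℝ)+2+i) * (((M+1+i).choose i : ℕ) : ℝ) / ((i:ℝ)+1) := by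
      rw [eq_div_iff (by positivity)]
      linarith [c1]
    have hc : (((M+2+i).choose i : ℕ) : ℝ)
        = ((M:ℝ)+2+i) * (((M+1+i).choose i : ℕ) : ℝ) / ((M:ℝ)+2) := by
      rw [eq_div_iff (by positivity)]
      linarith [c2]
    rw [hb, hc]
    have hM1 : ((M:ℝ)+1) ≠ 0 := by positivity
    have hM2 : ((M:ℝ)+2) ≠ 0 := by positivity
    have hMi : ((M:ℝ)+2+i) ≠ 0 := by positivity
    have hi1 : ((i:ℝ)+1) ≠ 0 := by positivity
    push_cast
    field_simp
    ring

lemma lemW1 {n i : ℕ} (h : i < n) :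
    ∑ k ∈ range (n+1), (-1:ℝ)^k * (n.choose k) * (k.choose i) * H k
      = (-1:ℝ)^(i+1) / ((n:ℝ) - i) := by
  set F : ℕ → ℝ := fun k => (-1:ℝ)^k * (n.choose k) * (k.choose i) * H k with hF
  have hsub : ∑ k ∈ Finset.Ico i (n+1), F k = ∑ k ∈ range (n+1), F k := by
    apply Finset.sum_subset
    · intro x hx
      simp only [Finset.mem_Ico] at hx
      simp [Finset.mem_range, hx.2]
    · intro x hx hx'
      simp only [Finset.mem_range] at hx
      simp only [Finset.mem_Ico, not_and, not_le] at hx'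
      have : x < i := by omega
      simp [hF, Nat.choose_eq_zero_of_lt this]
  rw [← hsub, Finset.sum_Ico_eq_sum_range]
  obtain ⟨M, hM⟩ : ∃ M, n - i = M + 1 := ⟨n - i - 1, by omega⟩
  rw [show n + 1 - i = M + 2 from by omega]
  have hn : n = M + 1 + i := by omega
  have step : ∀ l ∈ range (M+2), F (i + l)
      = ((-1:ℝ)^i * (n.choose i)) * ((-1:ℝ)^l * ((M+1).choose l) * H (l + i)) := by
    intro l hl
    simp only [Finset.mem_range] at hl
    have hkn : i + l ≤ n := by omega
    have hmul : n.choose (i+l) * (i+l).choose i = n.choose i * (n-i).choose l := by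
      have := Nat.choose_mul (n:=n) (k:=i+l) (s:=i) (Nat.le_add_right i l)
      simpa using this
    rw [hM] at hmul
    simp only [hF]
    have hcast : ((n.choose (i+l) : ℕ) : ℝ) * ((i+l).choose i : ℕ)
        = ((n.choose i : ℕ) : ℝ) * (((M+1).choose l : ℕ) : ℝ) := by
      exact_mod_cast congrArg (Nat.cast : ℕ → ℝ) hmul
    have : (-1:ℝ)^(i+l) = (-1:ℝ)^i * (-1:ℝ)^l := by rw [pow_add]
    rw [this, show i + l = l + i from by omega] at *
    calc (-1:ℝ)^i * (-1:ℝ)^l * (n.choose (l+i)) * ((l+i).choose i) * H (l+i)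
        = ((-1:ℝ)^i * (-1:ℝ)^l) * ((n.choose (l+i) : ℝ) * ((l+i).choose i)) * H (l+i) := by ring
      _ = ((-1:ℝ)^i * (-1:ℝ)^l) * ((n.choose i : ℝ) * ((M+1).choose l)) * H (l+i) := by
          rw [show ((n.choose (l+i) : ℕ) : ℝ) * (((l+i).choose i : ℕ) : ℝ)
              = ((n.choose i : ℕ) : ℝ) * (((M+1).choose l : ℕ) : ℝ) from by
            exact_mod_cast hcast]
      _ = ((-1:ℝ)^i * (n.choose i)) * ((-1:ℝ)^l * ((M+1).choose l) * H (l + i)) := by ring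
  rw [Finset.sum_congr rfl step, ← Finset.mul_sum, lemA M i]
  have hch : (M+1+i).choose i = n.choose i := by rw [← hn]
  have hpos : 0 < n.choose i := Nat.choose_pos (le_of_lt h)
  have hne : ((n.choose i : ℕ) : ℝ) ≠ 0 := by exact_mod_cast Nat.pos_iff_ne_zero.mp hpos
  have hni : (n:ℝ) - i = (M:ℝ) + 1 := by
    have : (n:ℕ) = M + 1 + i := hn
    push_cast [this]; ring
  rw [hch, hni]
  have hM1 : ((M:ℝ)+1) ≠ 0 := by positivity
  field_simp
  ring

lemma lemW2 (n : ℕ) :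
    ∑ k ∈ range (n+1), (-1:ℝ)^k * (n.choose k) * (k.choose n) * H k
      = (-1:ℝ)^n * H n := by
  rw [Finset.sum_range_succ]
  have : ∀ k ∈ range n, (-1:ℝ)^k * (n.choose k) * (k.choose n) * H k = 0 := by
    intro k hk
    simp only [Finset.mem_range] at hk
    simp [Nat.choose_eq_zero_of_lt hk]
  rw [Finset.sum_congr rfl this]
  simp

lemma lemW3 {n i : ℕ} (h : n < i) :
    ∑ k ∈ range (n+1), (-1:ℝ)^k * (n.choose k) * (k.choose i) * H k = 0 := by
  apply Finset.sum_eq_zero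
  intro k hk
  simp only [Finset.mem_range] at hk
  have : k < i := by omega
  simp [Nat.choose_eq_zero_of_lt this]

-- main reduction
lemma lemS (p n : ℕ) :
    ∑ k ∈ range (n+1), (-1:ℝ)^k * (n.choose k) * (((2*p+n+k).choose (p+k) : ℕ) : ℝ) * H k
      = (-1:ℝ)^n * ((((2*p+n).choose p : ℕ) : ℝ) * H n)
        + (-1:ℝ)^n * ∑ j ∈ range n, (-1:ℝ)^j * (((2*p+n).choose (p+j+1) : ℕ) : ℝ) / ((j:ℝ)+1) := by
  have expand : ∀ k, ((2*p+n+k).choose (p+k) : ℕ)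
      = ∑ i ∈ range (p+n+1), (k.choose i) * ((2*p+n).choose (p+n-i)) := by
    intro k
    have h1 : (2*p+n+k).choose (p+k) = (2*p+n+k).choose (p+n) :=
      Nat.choose_symm_of_eq_add (by omega)
    have h2 : (2*p+n+k) = k + (2*p+n) := by omega
    rw [h1, h2, Nat.add_choose_eq]
    rw [Finset.Nat.sum_antidiagonal_eq_sum_range_succ_mk]
  have step1 : ∑ k ∈ range (n+1), (-1:ℝ)^k * (n.choose k) * (((2*p+n+k).choose (p+k) : ℕ) : ℝ) * H k
      = ∑ i ∈ range (p+n+1), (∑ k ∈ range (n+1), (-1:ℝ)^k * (n.choose k) * (k.choose i) * H k)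
          * (((2*p+n).choose (p+n-i) : ℕ) : ℝ) := by
    have : ∀ k ∈ range (n+1), (-1:ℝ)^k * (n.choose k) * (((2*p+n+k).choose (p+k) : ℕ) : ℝ) * H k
        = ∑ i ∈ range (p+n+1), ((-1:ℝ)^k * (n.choose k) * (k.choose i) * H k)
            * (((2*p+n).choose (p+n-i) : ℕ) : ℝ) := by
      intro k _
      rw [expand k]
      push_cast
      rw [Finset.mul_sum, Finset.sum_mul]
      apply Finset.sum_congr rfl
      intro i _
      ring
    rw [Finset.sum_congr rfl this, Finset.sum_comm]
    apply Finset.sum_congr rfl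
    intro i _
    rw [Finset.sum_mul]
  rw [step1]
  have step2 : ∑ i ∈ range (p+n+1), (∑ k ∈ range (n+1), (-1:ℝ)^k * (n.choose k) * (k.choose i) * H k)
          * (((2*p+n).choose (p+n-i) : ℕ) : ℝ)
      = ∑ i ∈ range (n+1), (∑ k ∈ range (n+1), (-1:ℝ)^k * (n.choose k) * (k.choose i) * H k)
          * (((2*p+n).choose (p+n-i) : ℕ) : ℝ) := by
    symm
    apply Finset.sum_subset
    · intro x hx
      simp only [Finset.mem_range] at *
      omega
    · intro x hx hx'
      simp only [Finset.mem_range] at hx hx'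
      have : n < x := by omega
      rw [lemW3 this, zero_mul]
  rw [step2, Finset.sum_range_succ, lemW2, show p + n - n = p from by omega]
  have step3 : ∑ i ∈ range n, (∑ k ∈ range (n+1), (-1:ℝ)^k * (n.choose k) * (k.choose i) * H k)
          * (((2*p+n).choose (p+n-i) : ℕ) : ℝ)
      = ∑ i ∈ range n, ((-1:ℝ)^(i+1) / ((n:ℝ) - i)) * (((2*p+n).choose (p+n-i) : ℕ) : ℝ) := by
    apply Finset.sum_congr rfl
    intro i hi
    simp only [Finset.mem_range] at hi
    rw [lemW1 hi]
  rw [step3]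
  have step4 : ∑ i ∈ range n, ((-1:ℝ)^(i+1) / ((n:ℝ) - i)) * (((2*p+n).choose (p+n-i) : ℕ) : ℝ)
      = (-1:ℝ)^n * ∑ j ∈ range n, (-1:ℝ)^j * (((2*p+n).choose (p+j+1) : ℕ) : ℝ) / ((j:ℝ)+1) := by
    rw [← Finset.sum_range_reflect]
    rw [Finset.mul_sum]
    apply Finset.sum_congr rfl
    intro j hj
    simp only [Finset.mem_range] at hj
    have e1 : p + n - (n - 1 - j) = p + j + 1 := by omega
    have e2 : ((n:ℝ) - ((n - 1 - j : ℕ) : ℝ)) = (j:ℝ) + 1 := by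
      have : (n - 1 - j : ℕ) + (j + 1) = n := by omega
      have h' : ((n - 1 - j : ℕ) : ℝ) + ((j:ℝ) + 1) = (n:ℝ) := by exact_mod_cast congrArg (Nat.cast : ℕ → ℝ) this
      linarith
    have e3 : (-1:ℝ)^(n - 1 - j + 1) = (-1:ℝ)^n * (-1:ℝ)^j := by
      have hj1 : (n - 1 - j + 1) + j = n := by omega
      have : (-1:ℝ)^(n - 1 - j + 1) * (-1:ℝ)^j = (-1:ℝ)^n := by
        rw [← pow_add, hj1]
      have hsq : (-1:ℝ)^j * (-1:ℝ)^j = 1 := by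
        rw [← pow_add]; simp [pow_add, ← two_mul]
      calc (-1:ℝ)^(n - 1 - j + 1) = (-1:ℝ)^(n - 1 - j + 1) * ((-1:ℝ)^j * (-1:ℝ)^j) := by rw [hsq]; ring
        _ = ((-1:ℝ)^(n - 1 - j + 1) * (-1:ℝ)^j) * (-1:ℝ)^j := by ring
        _ = (-1:ℝ)^n * (-1:ℝ)^j := by rw [this]
    rw [e1, e2, e3]
    ring
  rw [step4]
  ring

lemma lemV (p : ℕ) : ∀ n : ℕ,
    ∑ j ∈ range n, (-1:ℝ)^j * (((2*p+n).choose (p+j+1) : ℕ) : ℝ) / ((j:ℝ)+1)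
      = (((2*p+n).choose p : ℕ) : ℝ) * (H n - H (n/2) + H (p + n/2) - H p) := by
  intro n
  induction n with
  | zero => simp
  | succ n ih =>
    -- abbreviations
    set b : ℕ := (2*p+n).choose (p+n+1) with hbdef
    set c : ℕ := (2*p+n).choose p with hcdef
    set c' : ℕ := (2*p+n+1).choose p with hc'def
    have hb : b * (p+n+1) = c * p := by
      have h1 := Nat.choose_succ_right_eq (2*p+n) (p+n)
      have h2 : (2*p+n).choose (p+n) = c := by
        rw [hcdef]; exact Nat.choose_symm_of_eq_add (by omega)
      rw [h2] at h1
      simpa [hbdef, show 2*p+n - (p+n) = p from by omega] using h1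
    have hc : c * (2*p+n+1) = c' * (p+n+1) := by
      have h1 := Nat.choose_mul_succ_eq (2*p+n) p
      rwa [show 2*p+n+1 - p = p+n+1 from by omega] at h1
    -- termwise identity and summation
    have key : ∀ j ∈ range (n+1),
        ((p:ℝ)+n+1) * ((-1:ℝ)^j * (((2*p+(n+1)).choose (p+j+1) : ℕ) : ℝ) / ((j:ℝ)+1))
        = ((2*(p:ℝ)+n+1)) * ((-1:ℝ)^j * (((2*p+n).choose (p+j+1) : ℕ) : ℝ) / ((j:ℝ)+1))
          + ((-1:ℝ)^j * (((2*p+n).choose (p+j) : ℕ) : ℝ)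
             - (-1:ℝ)^(j+1) * (((2*p+n).choose (p+j+1) : ℕ) : ℝ)) := by
      intro j hj
      simp only [Finset.mem_range] at hj
      have hnat : (2*p+n).choose (p+j+1) * (2*p+n+1)
          = (2*p+(n+1)).choose (p+j+1) * (p + (n - j)) := by
        have := Nat.choose_mul_succ_eq (2*p+n) (p+j+1)
        rw [this, show 2*p+n+1 - (p+j+1) = p + (n - j) from by omega,
          show 2*p+n+1 = 2*p+(n+1) from by omega]
      have hcast : (((2*p+n).choose (p+j+1) : ℕ) : ℝ) * (2*(p:ℝ)+n+1)
          = (((2*p+(n+1)).choose (p+j+1) : ℕ) : ℝ) * ((p:ℝ) + ((n:ℝ) - j)) := by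
        have hnj : ((n - j : ℕ) : ℝ) = (n:ℝ) - j := by
          have : j ≤ n := by omega
          push_cast [this]; ring
        have := congrArg (Nat.cast : ℕ → ℝ) hnat
        push_cast at this
        rw [hnj] at this
        convert this using 2 <;> push_cast <;> ring
      have hpascal : ((2*p+(n+1)).choose (p+j+1) : ℕ)
          = (2*p+n).choose (p+j) + (2*p+n).choose (p+j+1) := by
        rw [show 2*p+(n+1) = (2*p+n)+1 from by omega]
        exact Nat.choose_succ_succ (2*p+n) (p+j)
      have hpc : (((2*p+(n+1)).choose (p+j+1) : ℕ) : ℝ)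
          = (((2*p+n).choose (p+j) : ℕ) : ℝ) + (((2*p+n).choose (p+j+1) : ℕ) : ℝ) := by
        exact_mod_cast congrArg (Nat.cast : ℕ → ℝ) hpascal
      have hj1 : ((j:ℝ)+1) ≠ 0 := by positivity
      set s : ℝ := (-1:ℝ)^j with hs
      set X : ℝ := (((2*p+(n+1)).choose (p+j+1) : ℕ) : ℝ) with hX
      set Y : ℝ := (((2*p+n).choose (p+j+1) : ℕ) : ℝ) with hY
      set Z : ℝ := (((2*p+n).choose (p+j) : ℕ) : ℝ) with hZ
      have e1 : ((p:ℝ)+n+1) * (s * X / ((j:ℝ)+1))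
          = (s * (X * ((p:ℝ) + ((n:ℝ) - j)))) / ((j:ℝ)+1) + s * X := by
        field_simp
        ring
      rw [e1, ← hcast, hpc]
      have : (-1:ℝ)^(j+1) = -s := by rw [hs, pow_succ]; ring
      rw [this]
      field_simp
      ring
    -- sum the key identity
    have hsum : ((p:ℝ)+n+1) * (∑ j ∈ range (n+1), (-1:ℝ)^j * (((2*p+(n+1)).choose (p+j+1) : ℕ) : ℝ) / ((j:ℝ)+1))
        = (2*(p:ℝ)+n+1) * (∑ j ∈ range (n+1), (-1:ℝ)^j * (((2*p+n).choose (p+j+1) : ℕ) : ℝ) / ((j:ℝ)+1))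
          + ∑ j ∈ range (n+1), ((-1:ℝ)^j * (((2*p+n).choose (p+j) : ℕ) : ℝ)
             - (-1:ℝ)^(j+1) * (((2*p+n).choose (p+j+1) : ℕ) : ℝ)) := by
      rw [Finset.mul_sum, Finset.mul_sum, ← Finset.sum_add_distrib]
      exact Finset.sum_congr rfl key
    have htel : ∑ j ∈ range (n+1), ((-1:ℝ)^j * (((2*p+n).choose (p+j) : ℕ) : ℝ)
             - (-1:ℝ)^(j+1) * (((2*p+n).choose (p+j+1) : ℕ) : ℝ))
        = (c:ℝ) - (-1:ℝ)^(n+1) * (b:ℝ) := by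
      have h0 := Finset.sum_range_sub' (fun j => (-1:ℝ)^j * (((2*p+n).choose (p+j) : ℕ) : ℝ)) (n+1)
      simp only [pow_zero, one_mul, Nat.add_zero, show ∀ j:ℕ, p + (j+1) = p + j + 1 from fun j => by omega] at h0
      rw [hbdef, hcdef]
      exact h0
    have hfirst : ∑ j ∈ range (n+1), (-1:ℝ)^j * (((2*p+n).choose (p+j+1) : ℕ) : ℝ) / ((j:ℝ)+1)
        = (c:ℝ) * (H n - H (n/2) + H (p + n/2) - H p) + (-1:ℝ)^n * (b:ℝ) / ((n:ℝ)+1) := by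
      rw [Finset.sum_range_succ, ih]
    rw [htel, hfirst] at hsum
    -- now conclude
    have hpn1 : ((p:ℝ)+n+1) ≠ 0 := by positivity
    have hbR : ((b:ℕ):ℝ) * ((p:ℝ)+n+1) = ((c:ℕ):ℝ) * p := by
      exact_mod_cast congrArg (Nat.cast : ℕ → ℝ) hb
    have hcR : ((c:ℕ):ℝ) * (2*(p:ℝ)+n+1) = ((c':ℕ):ℝ) * ((p:ℝ)+n+1) := by
      exact_mod_cast congrArg (Nat.cast : ℕ → ℝ) hc
    have hbval : ((b:ℕ):ℝ) = ((c:ℕ):ℝ) * p / ((p:ℝ)+n+1) := by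
      rw [eq_div_iff hpn1]; linarith [hbR]
    have hcval : ((c':ℕ):ℝ) = ((c:ℕ):ℝ) * (2*(p:ℝ)+n+1) / ((p:ℝ)+n+1) := by
      rw [eq_div_iff hpn1]; linarith [hcR]
    apply mul_left_cancel₀ hpn1
    rw [hsum]
    have hgoalc : (((2*p+(n+1)).choose p : ℕ) : ℝ) = ((c':ℕ):ℝ) := by
      rw [hc'def, show 2*p+(n+1) = 2*p+n+1 from by omega]
    rw [hgoalc, hcval, hbval]
    rcases Nat.even_or_odd n with he | ho
    · have h3 : (-1:ℝ)^n = 1 := he.neg_one_pow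
      have h4 : (-1:ℝ)^(n+1) = -1 := by rw [pow_succ, h3]; ring
      obtain ⟨m, hm⟩ := he
      have h1 : n / 2 = m := by omega
      have h2 : (n+1) / 2 = m := by omega
      rw [h1, h2, h3, h4, H_succ n]
      have hn1 : ((n:ℝ)+1) ≠ 0 := by positivity
      set A : ℝ := H n
      set B : ℝ := H m
      set C : ℝ := H (p+m)
      set D : ℝ := H p
      set x : ℝ := ((c:ℕ):ℝ)
      field_simp
      ring
    · have h3 : (-1:ℝ)^n = -1 := ho.neg_one_pow
      have h4 : (-1:ℝ)^(n+1) = 1 := by rw [pow_succ, h3]; ring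
      obtain ⟨m, hm⟩ := ho
      have h1 : n / 2 = m := by omega
      have h2 : (n+1) / 2 = m + 1 := by omega
      rw [h1, h2, h3, h4, H_succ n, show p + (m+1) = (p+m) + 1 from by omega, H_succ (p+m), H_succ m]
      have hn1 : ((n:ℝ)+1) ≠ 0 := by positivity
      have hm1 : ((m:ℝ)+1) ≠ 0 := by positivity
      have hpm1 : ((p:ℝ)+m+1) ≠ 0 := by positivity
      have hnm : (n:ℝ) = 2*(m:ℝ)+1 := by exact_mod_cast congrArg (Nat.cast : ℕ → ℝ) hm
      set A : ℝ := H n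
      set B : ℝ := H m
      set C : ℝ := H (p+m)
      set D : ℝ := H p
      set x : ℝ := ((c:ℕ):ℝ)
      rw [hnm]
      push_cast
      field_simp
      ring


theorem stmt8 (p m : ℕ) :
    (∑ k ∈ Finset.range (2*m+1), (-1:ℝ)^k * ((2*m).choose k : ℝ) *
        (((2*p+2*m+k).choose (p+k) : ℕ) : ℝ) * H k
      = (((2*p+2*m).choose p : ℕ) : ℝ) * (2 * H (2*m) - H m + H (p+m) - H p)) ∧
    (∑ k ∈ Finset.range (2*m+2), (-1:ℝ)^k * ((2*m+1).choose k : ℝ) *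
        (((2*p+2*m+1+k).choose (p+k) : ℕ) : ℝ) * H k
      = (((2*p+2*m+1).choose p : ℕ) : ℝ) * (H p - H (p+m) + H m - 2 * H (2*m+1))) := by
  constructor
  · have hS := lemS p (2*m)
    have hV := lemV p (2*m)
    rw [show (2*m)/2 = m from by omega] at hV
    rw [hV] at hS
    rw [show (-1:ℝ)^(2*m) = 1 from Even.neg_one_pow ⟨m, by ring⟩] at hS
    rw [hS]
    ring
  · have hS := lemS p (2*m+1)
    have hV := lemV p (2*m+1)
    rw [show (2*m+1)/2 = m from by omega] at hV
    rw [hV] at hS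
    rw [show (-1:ℝ)^(2*m+1) = -1 from Odd.neg_one_pow ⟨m, rfl⟩] at hS
    rw [show 2*p+(2*m+1) = 2*p+2*m+1 from by omega] at hS
    rw [hS]
    ring
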